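/- arXiv:cs/0504016 — 2 statements merged into one kernel-verified Lean document; each statement's English description precedes it below -/
import Mathlib

section
/- Let H be the parity-check matrix of a proper array code with modulus q consisting of four block-rows, and let A be the 4q × mq matrix obtained by deleting some q − m block-columns from H. The shortened array code with parity-check matrix A has girth at least eight if and only if the set of labels of the block-columns retained in A is both non-averaging and 2-non-averaging over Z_q. -/
/-- The Tanner graph of a (possibly shortened) array code with modulus `q`,
block-row labels `a 0, …, a (r-1)` (elements of `ZMod q`), and retained
block-column label set `S ⊆ ZMod q`.  Row vertices are pairs `(i, x)`
(block-row `i`, row `x` within the block); column vertices are pairs `(j, y)`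
with `j ∈ S` (block-column labeled `j`, column `y` within the block).
A row `(i, x)` is adjacent to a column `(j, y)` iff the corresponding entry of
the parity-check matrix, i.e. entry `(x, y)` of `P ^ (a i * j)`, equals `1`,
which happens iff `y = x + a i * j`. -/
def tannerGraph (q r : ℕ) (a : Fin r → ZMod q) (S : Finset (ZMod q)) :
    SimpleGraph ((Fin r × ZMod q) ⊕ ({j // j ∈ S} × ZMod q)) where
  Adj u v :=
    match u, v with
    | Sum.inl (i, x), Sum.inr (j, y) => y = x + a i * (j : ZMod q)
    | Sum.inr (j, y), Sum.inl (i, x) => y = x + a i * (j : ZMod q)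
    | _, _ => False
  symm := ⟨by
    rintro (⟨i, x⟩ | ⟨j, y⟩) (⟨i', x'⟩ | ⟨j', y'⟩) h <;> simp_all⟩
  loopless := ⟨by
    rintro (⟨i, x⟩ | ⟨j, y⟩) h <;> simp_all⟩

/-- A set `S ⊆ ZMod q` is `c`-non-averaging over `Z_q` if `x + c·y ≡ (c+1)·z (mod q)`
with `x, y, z ∈ S` implies `x = y = z`.  (`1`-non-averaging = non-averaging.) -/
def CNonAveraging {q : ℕ} (c : ℕ) (S : Finset (ZMod q)) : Prop :=
  ∀ x ∈ S, ∀ y ∈ S, ∀ z ∈ S, x + (c : ZMod q) * y = ((c : ZMod q) + 1) * z → x = z ∧ y = z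

open SimpleGraph Walk

set_option maxHeartbeats 1000000 in
lemma cnaMaster {q : ℕ} [Fact q.Prime] (S : Finset (ZMod q))
    (h1 : CNonAveraging 1 S) (h2 : CNonAveraging 2 S)
    (j1 j2 j3 : ZMod q) (hj1 : j1 ∈ S) (hj2 : j2 ∈ S) (hj3 : j3 ∈ S)
    (e12 : j1 ≠ j2) (e13 : j1 ≠ j3) (e23 : j2 ≠ j3)
    (n1 n2 n3 : Fin 4) (ne12 : n1 ≠ n2) (ne13 : n1 ≠ n3) (ne23 : n2 ≠ n3)
    (heq : ((n1:ℕ):ZMod q) * (j1 - j3) + ((n2:ℕ):ZMod q) * (j2 - j1) + ((n3:ℕ):ZMod q) * (j3 - j2) = 0) : False := by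
  unfold CNonAveraging at h1 h2
  fin_cases n1 <;> fin_cases n2 <;> fin_cases n3 <;>
    first
    | exact ne12 rfl | exact ne13 rfl | exact ne23 rfl
    | exact e13 (h1 j1 hj1 j2 hj2 j3 hj3 (by push_cast at heq ⊢; linear_combination heq)).1
    | exact e13 (h1 j1 hj1 j2 hj2 j3 hj3 (by push_cast at heq ⊢; linear_combination -heq)).1
    | exact e12 (h1 j1 hj1 j3 hj3 j2 hj2 (by push_cast at heq ⊢; linear_combination heq)).1
    | exact e12 (h1 j1 hj1 j3 hj3 j2 hj2 (by push_cast at heq ⊢; linear_combination -heq)).1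
    | exact e12.symm (h1 j2 hj2 j3 hj3 j1 hj1 (by push_cast at heq ⊢; linear_combination heq)).1
    | exact e12.symm (h1 j2 hj2 j3 hj3 j1 hj1 (by push_cast at heq ⊢; linear_combination -heq)).1
    | exact e13 (h2 j1 hj1 j2 hj2 j3 hj3 (by push_cast at heq ⊢; linear_combination heq)).1
    | exact e13 (h2 j1 hj1 j2 hj2 j3 hj3 (by push_cast at heq ⊢; linear_combination -heq)).1
    | exact e13.symm (h2 j3 hj3 j2 hj2 j1 hj1 (by push_cast at heq ⊢; linear_combination heq)).1
    | exact e13.symm (h2 j3 hj3 j2 hj2 j1 hj1 (by push_cast at heq ⊢; linear_combination -heq)).1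
    | exact e12 (h2 j1 hj1 j3 hj3 j2 hj2 (by push_cast at heq ⊢; linear_combination heq)).1
    | exact e12 (h2 j1 hj1 j3 hj3 j2 hj2 (by push_cast at heq ⊢; linear_combination -heq)).1
    | exact e23.symm (h2 j3 hj3 j1 hj1 j2 hj2 (by push_cast at heq ⊢; linear_combination heq)).1
    | exact e23.symm (h2 j3 hj3 j1 hj1 j2 hj2 (by push_cast at heq ⊢; linear_combination -heq)).1
    | exact e12.symm (h2 j2 hj2 j3 hj3 j1 hj1 (by push_cast at heq ⊢; linear_combination heq)).1
    | exact e12.symm (h2 j2 hj2 j3 hj3 j1 hj1 (by push_cast at heq ⊢; linear_combination -heq)).1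
    | exact e23 (h2 j2 hj2 j1 hj1 j3 hj3 (by push_cast at heq ⊢; linear_combination heq)).1
    | exact e23 (h2 j2 hj2 j1 hj1 j3 hj3 (by push_cast at heq ⊢; linear_combination -heq)).1

lemma noShortAux {q : ℕ} [Fact q.Prime] (a : Fin 4 → ZMod q) (a₀ d : ZMod q) (hd : d ≠ 0)
    (hAP : ∀ i : Fin 4, a i = a₀ + (i : ℕ) * d) (ha : Function.Injective a)
    (S : Finset (ZMod q)) (h1 : CNonAveraging 1 S) (h2 : CNonAveraging 2 S)
    (i0 : Fin 4) (x0 : ZMod q)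
    (w : (tannerGraph q 4 a S).Walk (Sum.inl (i0,x0)) (Sum.inl (i0,x0)))
    (hw : w.IsCycle) : 8 ≤ w.length := by
  by_contra hlt
  push_neg at hlt
  cases w with
  | nil => exact absurd hw.three_le_length (by simp)
  | @cons _ v1 _ h1' w =>
  rcases v1 with ⟨i1,x1⟩ | ⟨j1,y1⟩
  · exact h1'
  cases w with
  | @cons _ v2 _ h2' w =>
  rcases v2 with ⟨i2,x2⟩ | ⟨j2,y2⟩
  on_goal 2 => exact h2'
  cases w with
  | nil => exact absurd hw.three_le_length (by simp)
  | @cons _ v3 _ h3' w =>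
  rcases v3 with ⟨i3,x3⟩ | ⟨j3,y3⟩
  · exact h3'
  cases w with
  | @cons _ v4 _ h4' w =>
  rcases v4 with ⟨i4,x4⟩ | ⟨j4,y4⟩
  on_goal 2 => exact h4'
  cases w with
  | nil =>
    -- 4-cycle
    have E1 : y1 = x0 + a i0 * (j1:ZMod q) := h1'
    have E2 : y1 = x2 + a i2 * (j1:ZMod q) := h2'
    have E3 : y3 = x2 + a i2 * (j3:ZMod q) := h3'
    have E4 : y3 = x0 + a i0 * (j3:ZMod q) := h4'
    have hnd := hw.support_nodup
    simp only [Walk.support_cons, Walk.support_nil, List.tail_cons, List.nodup_cons,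
      List.mem_cons, List.mem_singleton, List.not_mem_nil, or_false, not_or] at hnd
    obtain ⟨⟨-, hu13, -⟩, ⟨-, hu20⟩, -⟩ := hnd
    by_cases hii : i0 = i2
    · have hx : x2 = x0 := by rw [hii] at E1; linear_combination E1 - E2
      exact hu20 (by rw [hx, ← hii])
    · have haa : a i0 - a i2 ≠ 0 := sub_ne_zero.mpr (ha.ne hii)
      have hz : (a i0 - a i2) * ((j1:ZMod q) - (j3:ZMod q)) = 0 := by
        linear_combination E2 - E1 - E3 + E4
      have hj : (j1:ZMod q) = (j3:ZMod q) := sub_eq_zero.mp ((mul_eq_zero.mp hz).resolve_left haa)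
      have hy : y1 = y3 := by linear_combination E1 - E4 + a i0 * hj
      exact hu13 (by rw [Subtype.ext hj, hy])
  | @cons _ v5 _ h5' w =>
  rcases v5 with ⟨i5,x5⟩ | ⟨j5,y5⟩
  · exact h5'
  cases w with
  | @cons _ v6 _ h6' w =>
  rcases v6 with ⟨i6,x6⟩ | ⟨j6,y6⟩
  on_goal 2 => exact h6'
  cases w with
  | nil =>
    -- 6-cycle
    have E1 : y1 = x0 + a i0 * (j1:ZMod q) := h1'
    have E2 : y1 = x2 + a i2 * (j1:ZMod q) := h2'
    have E3 : y3 = x2 + a i2 * (j3:ZMod q) := h3'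
    have E4 : y3 = x4 + a i4 * (j3:ZMod q) := h4'
    have E5 : y5 = x4 + a i4 * (j5:ZMod q) := h5'
    have E6 : y5 = x0 + a i0 * (j5:ZMod q) := h6'
    have hnd := hw.support_nodup
    simp only [Walk.support_cons, Walk.support_nil, List.tail_cons, List.nodup_cons,
      List.mem_cons, List.mem_singleton, List.not_mem_nil, or_false, not_or] at hnd
    obtain ⟨⟨-, hu13, -, hu15, -⟩, ⟨-, hu24, -, hu20⟩, ⟨-, hu35, -⟩, ⟨-, hu40⟩, -, -⟩ := hnd
    have hii02 : i0 ≠ i2 := by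
      intro h
      have hx : x2 = x0 := by rw [h] at E1; linear_combination E1 - E2
      exact hu20 (by rw [hx, ← h])
    have hii24 : i2 ≠ i4 := by
      intro h
      have hx : x2 = x4 := by rw [h] at E3; linear_combination E4 - E3
      exact hu24 (by rw [hx, h])
    have hii04 : i0 ≠ i4 := by
      intro h
      have hx : x4 = x0 := by rw [h] at E6; linear_combination E6 - E5
      exact hu40 (by rw [hx, ← h])
    have hjj13 : (j1:ZMod q) ≠ (j3:ZMod q) := by
      intro h
      have hy : y1 = y3 := by linear_combination E2 - E3 + a i2 * h
      exact hu13 (by rw [Subtype.ext h, hy])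
    have hjj35 : (j3:ZMod q) ≠ (j5:ZMod q) := by
      intro h
      have hy : y3 = y5 := by linear_combination E4 - E5 + a i4 * h
      exact hu35 (by rw [Subtype.ext h, hy])
    have hjj15 : (j1:ZMod q) ≠ (j5:ZMod q) := by
      intro h
      have hy : y1 = y5 := by linear_combination E1 - E6 + a i0 * h
      exact hu15 (by rw [Subtype.ext h, hy])
    have hE : d * (((i0:ℕ):ZMod q) * ((j1:ZMod q) - (j5:ZMod q))
        + ((i2:ℕ):ZMod q) * ((j3:ZMod q) - (j1:ZMod q))
        + ((i4:ℕ):ZMod q) * ((j5:ZMod q) - (j3:ZMod q))) = 0 := by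
      linear_combination E2 - E1 + E4 - E3 + E6 - E5
        - ((j1:ZMod q) - (j5:ZMod q)) * hAP i0
        - ((j3:ZMod q) - (j1:ZMod q)) * hAP i2
        - ((j5:ZMod q) - (j3:ZMod q)) * hAP i4
    have hX := (mul_eq_zero.mp hE).resolve_left hd
    exact cnaMaster S h1 h2 (j1:ZMod q) (j3:ZMod q) (j5:ZMod q) j1.2 j3.2 j5.2
      hjj13 hjj15 hjj35 i0 i2 i4 hii02 hii04 hii24 hX
  | @cons _ v7 _ h7' w =>
  rcases v7 with ⟨i7,x7⟩ | ⟨j7,y7⟩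
  · exact h7'
  cases w with
  | @cons _ v8 _ h8' w =>
  simp only [Walk.length_cons] at hlt
  omega

lemma sixCycleAux {q : ℕ} (a : Fin 4 → ZMod q) (S : Finset (ZMod q))
    (r1 r2 r3 : Fin 4) (hr12 : r1 ≠ r2) (hr13 : r1 ≠ r3) (hr23 : r2 ≠ r3)
    (c1 c2 c3 : {j // j ∈ S}) (hc12 : c1 ≠ c2) (hc13 : c1 ≠ c3) (hc23 : c2 ≠ c3)
    (hclose : a r1 * c1 + a r2 * c2 + a r3 * c3 = a r2 * c1 + a r3 * c2 + a r1 * c3) :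
    ¬ (8 ≤ (tannerGraph q 4 a S).egirth) := by
  set G := tannerGraph q 4 a S with hG
  set v0 : (Fin 4 × ZMod q) ⊕ ({j // j ∈ S} × ZMod q) := Sum.inl (r1, 0) with hv0
  set u1 : (Fin 4 × ZMod q) ⊕ ({j // j ∈ S} × ZMod q) := Sum.inr (c1, a r1 * c1) with hu1
  set u2 : (Fin 4 × ZMod q) ⊕ ({j // j ∈ S} × ZMod q) := Sum.inl (r2, a r1 * c1 - a r2 * c1) with hu2
  set u3 : (Fin 4 × ZMod q) ⊕ ({j // j ∈ S} × ZMod q) := Sum.inr (c2, a r1 * c1 - a r2 * c1 + a r2 * c2) with hu3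
  set u4 : (Fin 4 × ZMod q) ⊕ ({j // j ∈ S} × ZMod q) := Sum.inl (r3, a r1 * c1 - a r2 * c1 + a r2 * c2 - a r3 * c2) with hu4
  set u5 : (Fin 4 × ZMod q) ⊕ ({j // j ∈ S} × ZMod q) := Sum.inr (c3, a r1 * c1 - a r2 * c1 + a r2 * c2 - a r3 * c2 + a r3 * c3) with hu5
  have e1 : G.Adj v0 u1 := by show a r1 * (c1:ZMod q) = 0 + a r1 * c1; ring
  have e2 : G.Adj u1 u2 := by
    show a r1 * (c1:ZMod q) = (a r1 * c1 - a r2 * c1) + a r2 * c1; ring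
  have e3 : G.Adj u2 u3 := by
    show a r1 * (c1:ZMod q) - a r2 * c1 + a r2 * c2 = (a r1 * c1 - a r2 * c1) + a r2 * c2; ring
  have e4 : G.Adj u3 u4 := by
    show a r1 * (c1:ZMod q) - a r2 * c1 + a r2 * c2 = (a r1 * c1 - a r2 * c1 + a r2 * c2 - a r3 * c2) + a r3 * c2; ring
  have e5 : G.Adj u4 u5 := by
    show a r1 * (c1:ZMod q) - a r2 * c1 + a r2 * c2 - a r3 * c2 + a r3 * c3 = (a r1 * c1 - a r2 * c1 + a r2 * c2 - a r3 * c2) + a r3 * c3; ring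
  have e6 : G.Adj u5 v0 := by
    show a r1 * (c1:ZMod q) - a r2 * c1 + a r2 * c2 - a r3 * c2 + a r3 * c3 = 0 + a r1 * c3
    linear_combination hclose
  let w : G.Walk v0 v0 := .cons e1 (.cons e2 (.cons e3 (.cons e4 (.cons e5 (.cons e6 .nil)))))
  have hwlen : w.length = 6 := rfl
  have hwc : w.IsCycle := by
    rw [Walk.isCycle_def]
    refine ⟨⟨?_⟩, ?_, ?_⟩
    · simp [w, Walk.edges_cons, hv0, hu1, hu2, hu3, hu4, hu5, hr12, hr13, hr23, hc12, hc13, hc23,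
        hr12.symm, hr13.symm, hr23.symm, hc12.symm, hc13.symm, hc23.symm, Sym2.eq_iff]
    · simp [w]
    · simp [w, Walk.support_cons, hv0, hu1, hu2, hu3, hu4, hu5, hr12, hr13, hr23, hc12, hc13, hc23,
        hr12.symm, hr13.symm, hr23.symm, hc12.symm, hc13.symm, hc23.symm]
  intro hge
  have := le_egirth.mp hge v0 w hwc
  rw [hwlen] at this
  norm_num at this


lemma noShort {q : ℕ} [Fact q.Prime] (a : Fin 4 → ZMod q) (a₀ d : ZMod q) (hd : d ≠ 0)
    (hAP : ∀ i : Fin 4, a i = a₀ + (i : ℕ) * d) (ha : Function.Injective a)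
    (S : Finset (ZMod q)) (h1 : CNonAveraging 1 S) (h2 : CNonAveraging 2 S) :
    ∀ (v) (w : (tannerGraph q 4 a S).Walk v v), w.IsCycle → 8 ≤ w.length := by
  intro v w hw
  rcases v with ⟨i0, x0⟩ | ⟨j0, y0⟩
  · exact noShortAux a a₀ d hd hAP ha S h1 h2 i0 x0 w hw
  · cases w with
    | nil => exact absurd hw.three_le_length (by simp)
    | @cons _ v1 _ h1' p =>
      rcases v1 with ⟨i1, x1⟩ | ⟨j1, y1⟩
      · have hm : (Sum.inl (i1, x1) : (Fin 4 × ZMod q) ⊕ ({j // j ∈ S} × ZMod q))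
            ∈ (Walk.cons h1' p).support := by
          rw [Walk.support_cons]
          exact List.mem_cons_of_mem _ p.start_mem_support
        have hlen : ((Walk.cons h1' p).rotate _ hm).length = (Walk.cons h1' p).length := by
          have hp := (Walk.rotate_darts (Walk.cons h1' p) _ hm).perm.length_eq
          simpa [Walk.length_darts] using hp
        have h8 := noShortAux a a₀ d hd hAP ha S h1 h2 i1 x1
          ((Walk.cons h1' p).rotate _ hm) (hw.rotate hm)
        omega
      · exact (h1' : False).elim

/-- Let `H` be the parity-check matrix of a proper array code with
modulus `q` (an odd prime) consisting of four block-rows (labels in arithmetic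
progression with common difference `d ≢ 0`, distinct), and let `A` be obtained
from `H` by deleting all block-columns whose labels are outside `S`.  The
shortened array code with parity-check matrix `A` has girth at least eight iff
`S` is both non-averaging and 2-non-averaging over `Z_q`. -/
theorem pac_r4_girth_eight_iff_nonaveraging (q : ℕ) (hq : q.Prime) (hqodd : Odd q)
    (a : Fin 4 → ZMod q) (a₀ d : ZMod q) (hd : d ≠ 0)
    (hAP : ∀ i : Fin 4, a i = a₀ + (i : ℕ) * d) (ha : Function.Injective a)
    (S : Finset (ZMod q)) :
    8 ≤ (tannerGraph q 4 a S).egirth ↔ CNonAveraging 1 S ∧ CNonAveraging 2 S := by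
  haveI : Fact q.Prime := ⟨hq⟩
  have hA0 : a 0 = a₀ := by
    have h := hAP 0; rw [show ((0 : Fin 4) : ℕ) = 0 from rfl] at h; push_cast at h
    rw [h]; ring
  have hA1 : a 1 = a₀ + d := by
    have h := hAP 1; rw [show ((1 : Fin 4) : ℕ) = 1 from rfl] at h; push_cast at h
    rw [h]; ring
  have hA2 : a 2 = a₀ + 2 * d := by
    have h := hAP 2; rw [show ((2 : Fin 4) : ℕ) = 2 from rfl] at h; push_cast at h
    rw [h]
  have hA3 : a 3 = a₀ + 3 * d := by
    have h := hAP 3; rw [show ((3 : Fin 4) : ℕ) = 3 from rfl] at h; push_cast at h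
    rw [h]
  have h2q : (2 : ZMod q) ≠ 0 := by
    intro h
    exact ha.ne (show (0 : Fin 4) ≠ 2 by decide)
      (by rw [hA0, hA2, h]; ring)
  have h3q : (3 : ZMod q) ≠ 0 := by
    intro h
    exact ha.ne (show (0 : Fin 4) ≠ 3 by decide)
      (by rw [hA0, hA3, h]; ring)
  constructor
  · intro hg
    constructor
    · intro x hx y hy z hz hxy
      by_contra hne
      have hxy' : x + y = 2 * z := by push_cast at hxy; linear_combination hxy
      have hxz : x ≠ z := by
        intro h
        exact hne ⟨h, by linear_combination hxy' - h⟩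
      have hyz : y ≠ z := by
        intro h
        exact hne ⟨by linear_combination hxy' - h, h⟩
      have hxny : x ≠ y := by
        intro h
        have h5 : 2 * (x - z) = 0 := by linear_combination hxy' + h
        exact hxz (sub_eq_zero.mp ((mul_eq_zero.mp h5).resolve_left h2q))
      refine sixCycleAux a S 2 1 0 (by decide) (by decide) (by decide)
        ⟨x, hx⟩ ⟨y, hy⟩ ⟨z, hz⟩
        (fun h => hxny (Subtype.ext_iff.mp h))
        (fun h => hxz (Subtype.ext_iff.mp h))
        (fun h => hyz (Subtype.ext_iff.mp h)) ?_ hg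
      show a 2 * x + a 1 * y + a 0 * z = a 1 * x + a 0 * y + a 2 * z
      rw [hA0, hA1, hA2]
      linear_combination d * hxy'
    · intro x hx y hy z hz hxy
      by_contra hne
      have hxy' : x + 2 * y = 3 * z := by push_cast at hxy; linear_combination hxy
      have hxz : x ≠ z := by
        intro h
        have h5 : 2 * (y - z) = 0 := by linear_combination hxy' - h
        exact hne ⟨h, sub_eq_zero.mp ((mul_eq_zero.mp h5).resolve_left h2q)⟩
      have hyz : y ≠ z := by
        intro h
        exact hne ⟨by linear_combination hxy' - 2 * h, h⟩
      have hxny : x ≠ y := by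
        intro h
        have h5 : 3 * (x - z) = 0 := by linear_combination hxy' + 2 * h
        exact hxz (sub_eq_zero.mp ((mul_eq_zero.mp h5).resolve_left h3q))
      refine sixCycleAux a S 3 2 0 (by decide) (by decide) (by decide)
        ⟨x, hx⟩ ⟨y, hy⟩ ⟨z, hz⟩
        (fun h => hxny (Subtype.ext_iff.mp h))
        (fun h => hxz (Subtype.ext_iff.mp h))
        (fun h => hyz (Subtype.ext_iff.mp h)) ?_ hg
      show a 3 * x + a 2 * y + a 0 * z = a 2 * x + a 0 * y + a 3 * z
      rw [hA0, hA2, hA3]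
      linear_combination d * hxy'
  · rintro ⟨h1, h2⟩
    rw [SimpleGraph.le_egirth]
    intro v w hwc
    exact_mod_cast noShort a a₀ d hd hAP ha S h1 h2 v w hwc
end

section
/- Every shortened proper array code with modulus q, column-weight r ≥ 3, and at least two retained block-columns has girth at most eight; that is, its Tanner graph contains a cycle of length eight (passing through two distinct block-columns). -/
/-- Every shortened proper array code with modulus `q` (an odd
prime), column-weight `r ≥ 3` (block-row labels in arithmetic progression with
common difference `d ≢ 0`, distinct) and at least two retained block-columns
has girth at most eight; that is, its Tanner graph contains a cycle of length
eight. -/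
theorem pac_girth_at_most_eight (q r : ℕ) (hq : q.Prime) (hqodd : Odd q)
    (hr : 3 ≤ r) (a : Fin r → ZMod q) (a₀ d : ZMod q) (hd : d ≠ 0)
    (hAP : ∀ i : Fin r, a i = a₀ + (i : ℕ) * d) (ha : Function.Injective a)
    (S : Finset (ZMod q)) (hS : 2 ≤ S.card) :
    (tannerGraph q r a S).egirth ≤ 8 ∧
      ∃ (v : (Fin r × ZMod q) ⊕ ({j // j ∈ S} × ZMod q))
        (c : (tannerGraph q r a S).Walk v v), c.IsCycle ∧ c.length = 8 := by
  haveI : Fact q.Prime := ⟨hq⟩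
  -- two distinct retained columns
  obtain ⟨j, hj, k, hk, hjk⟩ := Finset.one_lt_card.mp hS
  set J : {x // x ∈ S} := ⟨j, hj⟩
  set K : {x // x ∈ S} := ⟨k, hk⟩
  have hJK : J ≠ K := by simp [J, K, hjk]
  have hdjk : d * j ≠ d * k := fun h => hjk (mul_left_cancel₀ hd h)
  -- three block rows
  have h0 : (0 : ℕ) < r := by omega
  have h1 : (1 : ℕ) < r := by omega
  have h2 : (2 : ℕ) < r := by omega
  set i0 : Fin r := ⟨0, h0⟩
  set i1 : Fin r := ⟨1, h1⟩
  set i2 : Fin r := ⟨2, h2⟩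
  have ha0 : a i0 = a₀ := by simpa [i0] using hAP i0
  have ha1 : a i1 = a₀ + d := by simpa [i1] using hAP i1
  have ha2 : a i2 = a₀ + 2 * d := by
    have := hAP i2
    simp only [i2] at this
    push_cast at this
    linear_combination this
  set G := tannerGraph q r a S
  -- the eight vertices of the cycle
  set v0 : (Fin r × ZMod q) ⊕ ({x // x ∈ S} × ZMod q) := Sum.inl (i0, 0)
  set v1 : (Fin r × ZMod q) ⊕ ({x // x ∈ S} × ZMod q) := Sum.inr (J, a₀ * j)
  set v2 : (Fin r × ZMod q) ⊕ ({x // x ∈ S} × ZMod q) := Sum.inl (i1, -(d * j))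
  set v3 : (Fin r × ZMod q) ⊕ ({x // x ∈ S} × ZMod q) :=
    Sum.inr (K, -(d * j) + (a₀ + d) * k)
  set v4 : (Fin r × ZMod q) ⊕ ({x // x ∈ S} × ZMod q) := Sum.inl (i2, -(d * j) - d * k)
  set v5 : (Fin r × ZMod q) ⊕ ({x // x ∈ S} × ZMod q) :=
    Sum.inr (J, -(d * j) - d * k + (a₀ + 2 * d) * j)
  set v6 : (Fin r × ZMod q) ⊕ ({x // x ∈ S} × ZMod q) := Sum.inl (i1, -(d * k))
  set v7 : (Fin r × ZMod q) ⊕ ({x // x ∈ S} × ZMod q) :=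
    Sum.inr (K, -(d * k) + (a₀ + d) * k)
  have e01 : G.Adj v0 v1 := by show _ = _; rw [ha0]; try ring
  have e12 : G.Adj v1 v2 := by show _ = _; rw [ha1]; try ring
  have e23 : G.Adj v2 v3 := by show _ = _; rw [ha1]; try ring
  have e34 : G.Adj v3 v4 := by show _ = _; rw [ha2]; try ring
  have e45 : G.Adj v4 v5 := by show _ = _; rw [ha2]; try ring
  have e56 : G.Adj v5 v6 := by show _ = _; rw [ha1]; try ring
  have e67 : G.Adj v6 v7 := by show _ = _; rw [ha1]; try ring
  have e70 : G.Adj v7 v0 := by show _ = _; rw [ha0]; try ring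
  set w : G.Walk v0 v0 :=
    .cons e01 (.cons e12 (.cons e23 (.cons e34 (.cons e45 (.cons e56
      (.cons e67 (.cons e70 .nil)))))))
  have hlen : w.length = 8 := rfl
  have hi01 : i0 ≠ i1 := by simp [i0, i1, Fin.ext_iff]
  have hi02 : i0 ≠ i2 := by simp [i0, i2, Fin.ext_iff]
  have hi12 : i1 ≠ i2 := by simp [i1, i2, Fin.ext_iff]
  have hnd : (-(d * j) : ZMod q) ≠ -(d * k) := by simpa using hdjk
  have hc1 : (a₀ * j : ZMod q) ≠ -(d * j) - d * k + (a₀ + 2 * d) * j := by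
    intro h
    apply hdjk
    linear_combination -h
  have hc3 : (-(d * j) + (a₀ + d) * k : ZMod q) ≠ -(d * k) + (a₀ + d) * k := by
    intro h
    apply hdjk
    linear_combination -h
  have hcyc : w.IsCycle := by
    rw [SimpleGraph.Walk.isCycle_def]
    refine ⟨?_, by simp [w], ?_⟩
    · rw [SimpleGraph.Walk.isTrail_def]
      simp only [w, SimpleGraph.Walk.edges_cons, SimpleGraph.Walk.edges_nil,
        List.nodup_cons, List.mem_cons, List.not_mem_nil, or_false, List.nodup_nil,
        and_true, Sym2.eq, Sym2.rel_iff', Prod.mk.injEq, Prod.swap_prod_mk]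
      simp only [v0, v1, v2, v3, v4, v5, v6, v7, Sum.inl.injEq, Sum.inr.injEq,
        Prod.mk.injEq, not_or]
      refine ⟨⟨?_, ?_, ?_, ?_, ?_, ?_, ?_⟩, ⟨?_, ?_, ?_, ?_, ?_, ?_⟩,
        ⟨?_, ?_, ?_, ?_, ?_⟩, ⟨?_, ?_, ?_, ?_⟩, ⟨?_, ?_, ?_⟩, ⟨?_, ?_⟩, ?_⟩ <;>
        simp_all <;> intro h <;> simp_all
    · simp only [w, SimpleGraph.Walk.support_cons, SimpleGraph.Walk.support_nil,
        List.tail_cons, List.nodup_cons, List.mem_cons, List.not_mem_nil, or_false,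
        List.nodup_nil, and_true]
      simp only [v0, v1, v2, v3, v4, v5, v6, v7, Sum.inl.injEq, Sum.inr.injEq,
        Prod.mk.injEq, not_or, Sum.inr_ne_inl, Sum.inl_ne_inr]
      refine ⟨⟨?_, ?_, ?_, ?_, ?_, ?_, ?_⟩, ⟨?_, ?_, ?_, ?_, ?_, ?_⟩,
        ⟨?_, ?_, ?_, ?_, ?_⟩, ⟨?_, ?_, ?_, ?_⟩, ⟨?_, ?_, ?_⟩, ⟨?_, ?_⟩, ?_⟩ <;>
        simp_all <;> intro h <;> simp_all
  refine ⟨?_, v0, w, hcyc, hlen⟩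
  have : G.egirth ≤ w.length :=
    iInf_le_of_le v0 (iInf_le_of_le w (iInf_le_of_le hcyc le_rfl))
  simpa [hlen] using this
end
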